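/- Let z be a complex number with Im z > 0, and set w = −1 − 1/z and u = −1 − 1/w. Then Im w > 0, Im u > 0, −1 − 1/u = z, and Log z + Log w + Log u = 2π·i, where Log denotes the principal branch of the complex logarithm. Consequently, for any real α, the operator f ↦ (z ↦ f(−1−1/z)·exp(−α·Log z)) applied three times to a function on the upper half-plane multiplies it by exp(−2πiα). -/

import Mathlib

open Complex

lemma stmt17_aux_im (z : ℂ) (hz : 0 < z.im) : 0 < (-1 - 1 / z).im := by
  have hz0 : z ≠ 0 := fun h => by simp [h] at hz
  have : (-1 - 1 / z).im = z.im / Complex.normSq z := by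
    simp [Complex.sub_im, Complex.div_im, Complex.one_im, Complex.one_re]
    ring
  rw [this]
  exact div_pos hz (Complex.normSq_pos.2 hz0)

lemma stmt17_arg_pos (z : ℂ) (hz : 0 < z.im) : 0 < Complex.arg z := by
  rcases lt_or_eq_of_le (Complex.arg_nonneg_iff.2 hz.le) with h | h
  · exact h
  · exact absurd (Complex.arg_eq_zero_iff.1 h.symm).2 hz.ne'

/-- for `Im z > 0`, with `w = −1 − 1/z` and `u = −1 − 1/w`, one has
`Im w > 0`, `Im u > 0`, `−1 − 1/u = z` and `Log z + Log w + Log u = 2πi`;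
consequently the operator `f ↦ (z ↦ f(−1−1/z) exp(−α Log z))` applied three times
multiplies a function on the upper half-plane by `exp(−2πiα)`. -/
theorem stmt17 (z : ℂ) (hz : 0 < z.im) :
    0 < (-1 - 1 / z).im ∧
    0 < (-1 - 1 / (-1 - 1 / z)).im ∧
    -1 - 1 / (-1 - 1 / (-1 - 1 / z)) = z ∧
    Complex.log z + Complex.log (-1 - 1 / z) + Complex.log (-1 - 1 / (-1 - 1 / z))
      = 2 * Real.pi * Complex.I ∧
    ∀ (α : ℝ) (f : ℂ → ℂ),
      ((fun (g : ℂ → ℂ) =>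
          fun w => g (-1 - 1 / w) * Complex.exp (-(α : ℂ) * Complex.log w))^[3] f) z
        = Complex.exp (-2 * Real.pi * Complex.I * α) * f z := by
  have hz0 : z ≠ 0 := fun h => by simp [h] at hz
  have hw : 0 < (-1 - 1 / z).im := stmt17_aux_im z hz
  set w := -1 - 1 / z with hwdef
  have hw0 : w ≠ 0 := fun h => by simp [h] at hw
  have hu : 0 < (-1 - 1 / w).im := stmt17_aux_im w hw
  set u := -1 - 1 / w with hudef
  have hu0 : u ≠ 0 := fun h => by simp [h] at hu
  have hz1 : z + 1 ≠ 0 := fun h => by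
    have : (z + 1).im = 0 := by rw [h]; simp
    simp at this; exact hz.ne' this
  have hz1' : (-1 : ℂ) - z ≠ 0 := fun h => hz1 (by linear_combination -h)
  have hwe : w = -(z + 1) / z := by rw [hwdef]; field_simp; ring
  have hue : u = -1 / (z + 1) := by
    rw [hudef, hwe, one_div_div]
    field_simp [hz1']
    ring
  have hfix : -1 - 1 / u = z := by
    rw [hue]; field_simp; ring
  have hprod : z * w * u = 1 := by
    rw [hue, hwe]; field_simp
  have hlog : Complex.log z + Complex.log w + Complex.log u
      = 2 * Real.pi * Complex.I := by
    have hexp : Complex.exp (Complex.log z + Complex.log w + Complex.log u) = 1 := by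
      rw [Complex.exp_add, Complex.exp_add, Complex.exp_log hz0, Complex.exp_log hw0,
        Complex.exp_log hu0, hprod]
    obtain ⟨n, hn⟩ := Complex.exp_eq_one_iff.1 hexp
    have him : Complex.arg z + Complex.arg w + Complex.arg u = n * (2 * Real.pi) := by
      have := congrArg Complex.im hn
      simpa [Complex.log_im, Complex.mul_im, Complex.mul_re] using this
    have hπ := Real.pi_pos
    have h1 : 0 < Complex.arg z := stmt17_arg_pos z hz
    have h2 : 0 < Complex.arg w := stmt17_arg_pos w hw
    have h3 : 0 < Complex.arg u := stmt17_arg_pos u hu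
    have l1 := Complex.arg_le_pi z
    have l2 := Complex.arg_le_pi w
    have l3 := Complex.arg_le_pi u
    have hn1 : n = 1 := by
      have hlb : (0 : ℝ) < n * (2 * Real.pi) := him ▸ by linarith
      have hub : n * (2 * Real.pi) ≤ 3 * Real.pi := him ▸ by linarith
      have hn0 : 0 < n := by
        by_contra h
        push_neg at h
        have : (n:ℝ) ≤ 0 := by exact_mod_cast h
        nlinarith
      have hn2 : n < 2 := by
        by_contra h
        push_neg at h
        have : (2 : ℝ) ≤ (n : ℝ) := by exact_mod_cast h
        nlinarith
      omega
    rw [hn, hn1]; push_cast; ring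
  refine ⟨hw, hu, hfix, hlog, ?_⟩
  intro α f
  simp only [Function.iterate_succ, Function.iterate_zero, Function.comp_apply, id_eq]
  rw [← hwdef, ← hudef, hfix]
  have he : Complex.exp (-(α : ℂ) * Complex.log u) * Complex.exp (-(α : ℂ) * Complex.log w)
      * Complex.exp (-(α : ℂ) * Complex.log z) = Complex.exp (-2 * Real.pi * Complex.I * α) := by
    rw [← Complex.exp_add, ← Complex.exp_add]
    congr 1
    linear_combination (-(α : ℂ)) * hlog
  linear_combination f z * he
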